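/- Let C be a graded strongly classical 2-absorbing second submodule of M and let I = ⊕_{γ∈G} I_γ be a graded ideal of R. Then for every r, s ∈ h(R), every γ ∈ G, and every graded submodule N of M with r·s·I_γ·C ⊆ N, either r·I_γ·C ⊆ N or s·I_γ·C ⊆ N or r·s·C ⊆ N. -/
import Mathlib


open Pointwise

section GradedDefs

variable {G : Type*} [Group G] [DecidableEq G] {R : Type*} [CommRing R]
  {M : Type*} [AddCommGroup M] [Module R M]

/-- `R` is a `G`-graded commutative ring via the additive subgroups `𝒜 α`:
`R_α R_β ⊆ R_{αβ}` and `R = ⊕_{α ∈ G} R_α`. -/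
structure IsRingGrading (𝒜 : G → AddSubgroup R) : Prop where
  one_mem : (1 : R) ∈ 𝒜 1
  mul_mem : ∀ ⦃α β : G⦄ ⦃r s : R⦄, r ∈ 𝒜 α → s ∈ 𝒜 β → r * s ∈ 𝒜 (α * β)
  isInternal : DirectSum.IsInternal 𝒜

/-- `M` is a graded module over the `G`-graded ring `R`:
`R_α M_β ⊆ M_{αβ}` and `M = ⊕_{α ∈ G} M_α`. -/
structure IsModuleGrading (𝒜 : G → AddSubgroup R) (ℳ : G → AddSubgroup M) : Prop where
  smul_mem : ∀ ⦃α β : G⦄ ⦃r : R⦄ ⦃m : M⦄, r ∈ 𝒜 α → m ∈ ℳ β → r • m ∈ ℳ (α * β)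
  isInternal : DirectSum.IsInternal ℳ

/-- A submodule `N` of `M` is a graded submodule iff `N = ⊕_{α ∈ G} (N ∩ M_α)`,
equivalently, every element of `N` is a sum of homogeneous elements of `N`. -/
def IsGradedSubmodule (ℳ : G → AddSubgroup M) (N : Submodule R M) : Prop :=
  ∀ n ∈ N, n ∈ Submodule.span R {m : M | m ∈ N ∧ ∃ α, m ∈ ℳ α}

/-- An ideal `I` of `R` is a graded ideal iff `I = ⊕_{α ∈ G} (I ∩ R_α)`. -/
def IsGradedIdeal (𝒜 : G → AddSubgroup R) (I : Ideal R) : Prop :=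
  ∀ r ∈ I, r ∈ Ideal.span {s : R | s ∈ I ∧ ∃ α, s ∈ 𝒜 α}

/-- A proper graded submodule `C` of `M` is completely graded irreducible if whenever
`C = ⋂_{λ ∈ Δ} C_λ` for a family of graded submodules `C_λ`, then `C = C_β` for some `β`. -/
def CompletelyGradedIrreducible (ℳ : G → AddSubgroup M) (C : Submodule R M) : Prop :=
  IsGradedSubmodule ℳ C ∧ C ≠ ⊤ ∧
    ∀ S : Set (Submodule R M), (∀ D ∈ S, IsGradedSubmodule ℳ D) → C = sInf S → C ∈ S

/-- A non-zero graded submodule `C` of `M` is a graded classical 2-absorbing second submodule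
if whenever `r, s, t ∈ h(R)`, `U` is a completely graded irreducible submodule of `M` and
`r·s·t·C ⊆ U`, then `r·s·C ⊆ U` or `s·t·C ⊆ U` or `r·t·C ⊆ U`. -/
def IsGrClassical2AbsorbingSecond (𝒜 : G → AddSubgroup R) (ℳ : G → AddSubgroup M)
    (C : Submodule R M) : Prop :=
  C ≠ ⊥ ∧ IsGradedSubmodule ℳ C ∧
    ∀ r s t : R, (∃ α, r ∈ 𝒜 α) → (∃ β, s ∈ 𝒜 β) → (∃ γ, t ∈ 𝒜 γ) →
      ∀ U : Submodule R M, CompletelyGradedIrreducible ℳ U →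
        r • s • t • C ≤ U → (r • s • C ≤ U ∨ s • t • C ≤ U ∨ r • t • C ≤ U)

/-- A non-zero graded submodule `C` of `M` is a graded strongly classical 2-absorbing second
submodule if whenever `r, s, t ∈ h(R)`, `U₁, U₂, U₃` are completely graded irreducible
submodules of `M` and `r·s·t·C ⊆ U₁ ∩ U₂ ∩ U₃`, then `r·s·C ⊆ U₁ ∩ U₂ ∩ U₃` or
`s·t·C ⊆ U₁ ∩ U₂ ∩ U₃` or `r·t·C ⊆ U₁ ∩ U₂ ∩ U₃`. -/
def IsGrStronglyClassical2AbsorbingSecond (𝒜 : G → AddSubgroup R) (ℳ : G → AddSubgroup M)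
    (C : Submodule R M) : Prop :=
  C ≠ ⊥ ∧ IsGradedSubmodule ℳ C ∧
    ∀ r s t : R, (∃ α, r ∈ 𝒜 α) → (∃ β, s ∈ 𝒜 β) → (∃ γ, t ∈ 𝒜 γ) →
      ∀ U₁ U₂ U₃ : Submodule R M, CompletelyGradedIrreducible ℳ U₁ →
        CompletelyGradedIrreducible ℳ U₂ → CompletelyGradedIrreducible ℳ U₃ →
        r • s • t • C ≤ U₁ ⊓ U₂ ⊓ U₃ →
        (r • s • C ≤ U₁ ⊓ U₂ ⊓ U₃ ∨ s • t • C ≤ U₁ ⊓ U₂ ⊓ U₃ ∨ r • t • C ≤ U₁ ⊓ U₂ ⊓ U₃)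

/-- A non-zero graded submodule `S` of `M` is a graded weakly second submodule if whenever
`r, s ∈ h(R)`, `N` is a graded submodule of `M` and `r·s·S ⊆ N`, then `r·S ⊆ N` or `s·S ⊆ N`. -/
def IsGrWeaklySecond (𝒜 : G → AddSubgroup R) (ℳ : G → AddSubgroup M)
    (S : Submodule R M) : Prop :=
  S ≠ ⊥ ∧ IsGradedSubmodule ℳ S ∧
    ∀ r s : R, (∃ α, r ∈ 𝒜 α) → (∃ β, s ∈ 𝒜 β) →
      ∀ N : Submodule R M, IsGradedSubmodule ℳ N →
        r • s • S ≤ N → (r • S ≤ N ∨ s • S ≤ N)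

/-- A proper graded ideal `I` of `R` is a graded 2-absorbing ideal if whenever `r, s, t ∈ h(R)`
with `r·s·t ∈ I`, then `r·s ∈ I` or `r·t ∈ I` or `s·t ∈ I`. -/
def IsGr2AbsorbingIdeal (𝒜 : G → AddSubgroup R) (I : Ideal R) : Prop :=
  I ≠ ⊤ ∧ IsGradedIdeal 𝒜 I ∧
    ∀ r s t : R, (∃ α, r ∈ 𝒜 α) → (∃ β, s ∈ 𝒜 β) → (∃ γ, t ∈ 𝒜 γ) →
      r * s * t ∈ I → (r * s ∈ I ∨ r * t ∈ I ∨ s * t ∈ I)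

end GradedDefs

section AuxProof

variable {G : Type*} [Group G] [DecidableEq G] {R : Type*} [CommRing R]
  {M : Type*} [AddCommGroup M] [Module R M]

lemma mem_psmul {a : R} {S : Submodule R M} {x : M} :
    x ∈ a • S ↔ ∃ y ∈ S, a • y = x := by
  rw [← SetLike.mem_coe, Submodule.coe_pointwise_smul]
  exact Set.mem_smul_set

lemma psmul_le_iff {a : R} {S U : Submodule R M} :
    a • S ≤ U ↔ ∀ c ∈ S, a • c ∈ U := by
  constructor
  · intro h c hc
    exact h (Submodule.smul_mem_pointwise_smul c a S hc)
  · intro h x hx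
    obtain ⟨c, hc, rfl⟩ := mem_psmul.mp hx
    exact h c hc

lemma psmul2_le_iff {a b : R} {S U : Submodule R M} :
    a • b • S ≤ U ↔ ∀ c ∈ S, a • b • c ∈ U := by
  rw [smul_smul, psmul_le_iff]
  simp only [smul_smul]

lemma psmul3_le_iff {a b d : R} {S U : Submodule R M} :
    a • b • d • S ≤ U ↔ ∀ c ∈ S, a • b • d • c ∈ U := by
  rw [smul_smul, smul_smul, psmul_le_iff]
  simp only [smul_smul, mul_assoc]

/-- Every graded submodule is an intersection of completely graded irreducible submodules:
for every `x ∉ N` there is a completely graded irreducible `U ⊇ N` with `x ∉ U`. -/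
lemma exists_cgi (ℳ : G → AddSubgroup M) {N : Submodule R M}
    (hN : IsGradedSubmodule ℳ N) {x : M} (hx : x ∉ N) :
    ∃ U : Submodule R M, CompletelyGradedIrreducible ℳ U ∧ N ≤ U ∧ x ∉ U := by
  set P : Set (Submodule R M) := {U | IsGradedSubmodule ℳ U ∧ N ≤ U ∧ x ∉ U} with hP
  have hNP : N ∈ P := ⟨hN, le_refl N, hx⟩
  obtain ⟨U, hNU, hUmax⟩ := zorn_le_nonempty₀ P (fun c hcP hchain y hy => by
    refine ⟨sSup c, ⟨?_, ?_, ?_⟩, fun z hz => le_sSup hz⟩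
    · intro n hn
      have hdir : DirectedOn (· ≤ ·) c := hchain.directedOn
      obtain ⟨D, hDc, hnD⟩ := (Submodule.mem_sSup_of_directed ⟨y, hy⟩ hdir).mp hn
      refine Submodule.span_mono ?_ ((hcP hDc).1 n hnD)
      rintro m ⟨hmD, hα⟩
      exact ⟨le_sSup hDc hmD, hα⟩
    · exact le_trans (hcP hy).2.1 (le_sSup hy)
    · intro hxs
      have hdir : DirectedOn (· ≤ ·) c := hchain.directedOn
      obtain ⟨D, hDc, hxD⟩ := (Submodule.mem_sSup_of_directed ⟨y, hy⟩ hdir).mp hxs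
      exact (hcP hDc).2.2 hxD) N hNP
  obtain ⟨hUgr, hNleU, hxU⟩ := hUmax.prop
  refine ⟨U, ⟨hUgr, ?_, ?_⟩, hNleU, hxU⟩
  · intro hU
    exact hxU (hU ▸ Submodule.mem_top)
  · intro S hS hUS
    by_cases hxall : ∀ D ∈ S, x ∈ D
    · exact absurd (hUS ▸ Submodule.mem_sInf.mpr hxall) hxU
    · push_neg at hxall
      obtain ⟨D, hDS, hxD⟩ := hxall
      have hUD : U ≤ D := hUS ▸ sInf_le hDS
      have : D = U := by
        have := hUmax.2 (y := D) ⟨hS D hDS, le_trans hNleU hUD, hxD⟩ hUD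
        exact le_antisymm this hUD
      exact this ▸ hDS

end AuxProof

theorem stmt10 {G : Type*} [Group G] [DecidableEq G] {R : Type*} [CommRing R]
    {M : Type*} [AddCommGroup M] [Module R M]
    (𝒜 : G → AddSubgroup R) (ℳ : G → AddSubgroup M)
    (h𝒜 : IsRingGrading 𝒜) (hℳ : IsModuleGrading 𝒜 ℳ)
    (C : Submodule R M) (hC : IsGrStronglyClassical2AbsorbingSecond 𝒜 ℳ C)
    (I : Ideal R) (hI : IsGradedIdeal 𝒜 I)
    (r s : R) (hr : ∃ α, r ∈ 𝒜 α) (hs : ∃ β, s ∈ 𝒜 β) (γ : G)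
    (N : Submodule R M) (hN : IsGradedSubmodule ℳ N)
    (hsub : ∀ a : R, a ∈ I → a ∈ 𝒜 γ → r • s • a • C ≤ N) :
    (∀ a : R, a ∈ I → a ∈ 𝒜 γ → r • a • C ≤ N) ∨
      (∀ a : R, a ∈ I → a ∈ 𝒜 γ → s • a • C ≤ N) ∨ r • s • C ≤ N := by
  by_cases h1 : ∀ a : R, a ∈ I → a ∈ 𝒜 γ → r • a • C ≤ N
  · exact Or.inl h1
  by_cases h2 : ∀ a : R, a ∈ I → a ∈ 𝒜 γ → s • a • C ≤ N
  · exact Or.inr (Or.inl h2)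
  right; right
  push_neg at h1 h2
  obtain ⟨a₁, ha₁I, ha₁γ, hne₁⟩ := h1
  obtain ⟨a₂, ha₂I, ha₂γ, hne₂⟩ := h2
  -- find completely graded irreducible V₁ ⊇ N missing some element of r•a₁•C
  obtain ⟨x₁, hx₁mem, hx₁N⟩ := SetLike.not_le_iff_exists.mp hne₁
  obtain ⟨V₁, hV₁cgi, hNV₁, hx₁V₁⟩ := exists_cgi ℳ hN hx₁N
  have hV₁ : ¬ (r • a₁ • C ≤ V₁) := fun h => hx₁V₁ (h hx₁mem)
  obtain ⟨x₂, hx₂mem, hx₂N⟩ := SetLike.not_le_iff_exists.mp hne₂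
  obtain ⟨V₂, hV₂cgi, hNV₂, hx₂V₂⟩ := exists_cgi ℳ hN hx₂N
  have hV₂ : ¬ (s • a₂ • C ≤ V₂) := fun h => hx₂V₂ (h hx₂mem)
  -- key claim
  have key : ∀ U : Submodule R M, CompletelyGradedIrreducible ℳ U → N ≤ U →
      r • s • C ≤ U := by
    intro U hUcgi hNU
    have habs := hC.2.2
    have hle₁ : r • s • a₁ • C ≤ U ⊓ V₁ ⊓ V₂ :=
      le_trans (hsub a₁ ha₁I ha₁γ) (le_inf (le_inf hNU hNV₁) hNV₂)
    have hle₂ : r • s • a₂ • C ≤ U ⊓ V₁ ⊓ V₂ :=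
      le_trans (hsub a₂ ha₂I ha₂γ) (le_inf (le_inf hNU hNV₁) hNV₂)
    rcases habs r s a₁ hr hs ⟨γ, ha₁γ⟩ U V₁ V₂ hUcgi hV₁cgi hV₂cgi hle₁ with h | h | h
    · exact le_trans h (le_trans inf_le_left inf_le_left)
    case inr.inr =>
      exact absurd (le_trans h (le_trans inf_le_left inf_le_right)) hV₁
    -- h : s • a₁ • C ≤ U ⊓ V₁ ⊓ V₂
    rcases habs r s a₂ hr hs ⟨γ, ha₂γ⟩ U V₁ V₂ hUcgi hV₁cgi hV₂cgi hle₂ with h' | h' | h'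
    · exact le_trans h' (le_trans inf_le_left inf_le_left)
    case inr.inl =>
      exact absurd (le_trans h' inf_le_right) hV₂
    -- h' : r • a₂ • C ≤ U ⊓ V₁ ⊓ V₂
    set a : R := a₁ + a₂ with ha
    have haI : a ∈ I := I.add_mem ha₁I ha₂I
    have haγ : a ∈ 𝒜 γ := (𝒜 γ).add_mem ha₁γ ha₂γ
    have hlea : r • s • a • C ≤ U ⊓ V₁ ⊓ V₂ :=
      le_trans (hsub a haI haγ) (le_inf (le_inf hNU hNV₁) hNV₂)
    rcases habs r s a hr hs ⟨γ, haγ⟩ U V₁ V₂ hUcgi hV₁cgi hV₂cgi hlea with h'' | h'' | h''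
    · exact le_trans h'' (le_trans inf_le_left inf_le_left)
    · -- s • a • C ≤ ∩ : contradiction with hV₂ using h (s•a₁•C ≤ ∩)
      exfalso
      apply hV₂
      rw [psmul2_le_iff]
      intro c hc
      have e : s • a₂ • c = s • a • c - s • a₁ • c := by
        rw [ha, add_smul, smul_add]; abel
      rw [e]
      have h1m : s • a • c ∈ V₂ :=
        (le_trans h'' inf_le_right) (psmul2_le_iff.mp le_rfl c hc)
      have h2m : s • a₁ • c ∈ V₂ :=
        (le_trans h inf_le_right) (psmul2_le_iff.mp le_rfl c hc)
      exact V₂.sub_mem h1m h2m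
    · -- r • a • C ≤ ∩ : contradiction with hV₁ using h' (r•a₂•C ≤ ∩)
      exfalso
      apply hV₁
      rw [psmul2_le_iff]
      intro c hc
      have e : r • a₁ • c = r • a • c - r • a₂ • c := by
        rw [ha, add_smul, smul_add]; abel
      rw [e]
      have h1m : r • a • c ∈ V₁ :=
        (le_trans h'' (le_trans inf_le_left inf_le_right))
          (psmul2_le_iff.mp le_rfl c hc)
      have h2m : r • a₂ • c ∈ V₁ :=
        (le_trans h' (le_trans inf_le_left inf_le_right))
          (psmul2_le_iff.mp le_rfl c hc)
      exact V₁.sub_mem h1m h2m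
  -- conclude
  by_contra hcon
  obtain ⟨x, hxmem, hxN⟩ := SetLike.not_le_iff_exists.mp hcon
  obtain ⟨U, hUcgi, hNU, hxU⟩ := exists_cgi ℳ hN hxN
  exact hxU (key U hUcgi hNU hxmem)
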